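/- Syntactic dependency does not imply semantic dependency in general: there exists a layered architecture configuration c and a layer l such that l →syn l (l syntactically depends on itself) but l does not semantically depend on itself. In particular, this holds for a single layer with one input port i and one output port o, where type(i) = type(o) = ∅ and A = {(i, o)}. -/

import Mathlib

/-!  A formalization of the layered architecture model:
ports, services, valuations, layers, configurations, attachment closure,
configuration semantics, semantic update, syntactic and semantic dependency. -/

open Set

universe u v

/-- A valuation of a set of ports `P` assigns to each port `p ∈ P` a service in `ty p`. -/
def Val {Port : Type u} {Service : Type v} (ty : Port → Set Service) (P : Set Port) :
    Type (max u v) :=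
  ∀ p, p ∈ P → ty p

/-- Restriction of a valuation to a smaller port set. -/
def Val.restrict {Port : Type u} {Service : Type v} {ty : Port → Set Service}
    {P Q : Set Port} (h : Q ⊆ P) (ν : Val ty P) : Val ty Q :=
  fun p hp => ν p (h hp)

/-- Pointwise agreement of valuations of (possibly different) port sets. -/
def ValEq {Port : Type u} {Service : Type v} {ty : Port → Set Service}
    {P Q : Set Port} (μ : Val ty P) (μ' : Val ty Q) : Prop :=
  ∀ p (h : p ∈ P) (h' : p ∈ Q), (μ p h : Service) = (μ' p h' : Service)

/-- A layer: input ports, output ports and a (nondeterministic) behavior function. -/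
structure Layer (Port : Type u) (Service : Type v) (ty : Port → Set Service) where
  I : Set Port
  O : Set Port
  f : Val ty I → Set (Val ty O)

variable {Port : Type u} {Service : Type v} {ty : Port → Set Service}

/-- All ports of a layer. -/
def Layer.ports (l : Layer Port Service ty) : Set Port := l.I ∪ l.O

/-- Semantic update of a layer: replace its behavior function. -/
def Layer.update (l : Layer Port Service ty) (f : Val ty l.I → Set (Val ty l.O)) :
    Layer Port Service ty := ⟨l.I, l.O, f⟩

/-- The raw data of a layered architecture configuration: a set of layers and an
attachment (a partial map from ports to ports, `A i = some o` meaning input port `i`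
is attached to output port `o`). -/
structure Config (Port : Type u) (Service : Type v) (ty : Port → Set Service) where
  L : Set (Layer Port Service ty)
  A : Port → Option Port

/-- All input ports occurring in the configuration. -/
def Config.inPorts (c : Config Port Service ty) : Set Port := ⋃ l ∈ c.L, l.I

/-- All output ports occurring in the configuration. -/
def Config.outPorts (c : Config Port Service ty) : Set Port := ⋃ l ∈ c.L, l.O

/-- All ports occurring in the configuration. -/
def Config.ports (c : Config Port Service ty) : Set Port := ⋃ l ∈ c.L, l.ports

/-- The open input ports: input ports not attached. -/
def Config.openIn (c : Config Port Service ty) : Set Port :=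
  c.inPorts \ {p | (c.A p).isSome}

/-- The axioms of a layered architecture configuration, relative to a global
partition of the ports into input ports `Inp` and output ports `Outp`. -/
structure IsLAC (Inp Outp : Set Port) (c : Config Port Service ty) : Prop where
  io_disj : Disjoint Inp Outp
  inputs : ∀ l ∈ c.L, l.I ⊆ Inp
  outputs : ∀ l ∈ c.L, l.O ⊆ Outp
  ports_disj : ∀ k ∈ c.L, ∀ l ∈ c.L, k = l ∨ Disjoint k.ports l.ports
  domA : ∀ i o, c.A i = some o → i ∈ c.inPorts ∧ o ∈ c.outPorts
  compat : ∀ i o, c.A i = some o → ty o ⊆ ty i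

instance : Nonempty (Layer Port Service ty) := ⟨⟨∅, ∅, fun _ => ∅⟩⟩

/-- The layer owning a port (unique in a configuration by port-disjointness). -/
noncomputable def Config.proj (c : Config Port Service ty) (p : Port) :
    Layer Port Service ty :=
  Classical.epsilon fun l => l ∈ c.L ∧ p ∈ l.ports

/-- The attachment closure `out(l)*`: the least set of ports of `c` containing `out(l)`,
closed under the attachment and under adding all input ports of any layer owning an
output port in the set. -/
def Config.star (c : Config Port Service ty) (l : Layer Port Service ty) : Set Port :=
  ⋂₀ {P | P ⊆ c.ports ∧ l.O ⊆ P ∧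
      (∀ i o, c.A i = some o → i ∈ P → o ∈ P) ∧
      (∀ o, o ∈ c.outPorts → o ∈ P → (c.proj o).I ⊆ P)}

/-- `ν` is a consistent valuation of the attachment closure `out(l)*` for the
open-input valuation `μ`. -/
def Config.witness (c : Config Port Service ty) (l : Layer Port Service ty)
    (μ : Val ty c.openIn) (ν : Val ty (c.star l)) : Prop :=
  (∀ p (h1 : p ∈ c.openIn) (h2 : p ∈ c.star l),
      (μ p h1 : Service) = (ν p h2 : Service)) ∧
  (∀ i o, c.A i = some o → ∀ (hi : i ∈ c.star l) (ho : o ∈ c.star l),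
      (ν i hi : Service) = (ν o ho : Service)) ∧
  (∀ o, o ∈ c.star l → o ∈ c.outPorts →
      ∃ (hI : (c.proj o).I ⊆ c.star l) (ξ : Val ty (c.proj o).O),
        ξ ∈ (c.proj o).f (Val.restrict hI ν) ∧
        ∀ p (h1 : p ∈ (c.proj o).O) (h2 : p ∈ c.star l),
          (ξ p h1 : Service) = (ν p h2 : Service))

/-- Configuration semantics of layer `l` in configuration `c`. -/
noncomputable def Config.sem (c : Config Port Service ty) (l : Layer Port Service ty)
    (μ : Val ty c.openIn) : Set (Val ty l.O) :=
  {κ | ∃ (ν : Val ty (c.star l)) (hO : l.O ⊆ c.star l),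
      κ = Val.restrict hO ν ∧ c.witness l μ ν}

/-- Semantic update of a configuration: replace the behavior function of layer `l`. -/
def Config.update (c : Config Port Service ty) (l : Layer Port Service ty)
    (f : Val ty l.I → Set (Val ty l.O)) : Config Port Service ty :=
  ⟨(c.L \ {l}) ∪ {l.update f}, c.A⟩

/-- Syntactic dependency: `l'` syntactically depends on `l`. -/
def Config.syndep (c : Config Port Service ty) (l l' : Layer Port Service ty) : Prop :=
  ∃ o ∈ l.O, ∃ i ∈ l'.I, c.A i = some o

open scoped Classical in
/-- Semantic dependency: `l'` semantically depends on `l`, i.e. some behavior update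
of `l` changes the configuration semantics of `l'` (of the updated layer if `l = l'`). -/
noncomputable def Config.semdep (c : Config Port Service ty)
    (l l' : Layer Port Service ty) : Prop :=
  if l = l' then
    ∃ (f : Val ty l.I → Set (Val ty l.O)) (μ : Val ty c.openIn)
      (μ' : Val ty (c.update l f).openIn),
      ValEq μ μ' ∧ c.sem l μ ≠ (c.update l f).sem (l.update f) μ'
  else
    ∃ (f : Val ty l.I → Set (Val ty l.O)) (μ : Val ty c.openIn)
      (μ' : Val ty (c.update l f).openIn),
      ValEq μ μ' ∧ c.sem l' μ ≠ (c.update l f).sem l' μ'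

/-- A configuration is usable iff some valuation of the open input ports makes the
configuration semantics of every layer nonempty. -/
def Config.usable (c : Config Port Service ty) : Prop :=
  ∃ μ : Val ty c.openIn, ∀ l ∈ c.L, c.sem l μ ≠ ∅

/-- syntactic dependency does not imply semantic dependency: a single
layer with one input port and one output port, both of empty type, attached to each
other, depends on itself syntactically but not semantically. -/
theorem syndep_not_implies_semdep :
    ∃ (Port Service : Type) (ty : Port → Set Service) (Inp Outp : Set Port)
      (c : Config Port Service ty) (l : Layer Port Service ty),
      IsLAC Inp Outp c ∧ l ∈ c.L ∧ c.L = {l} ∧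
      (∃ i o : Port, l.I = {i} ∧ l.O = {o} ∧ ty i = ∅ ∧ ty o = ∅ ∧ c.A i = some o) ∧
      c.syndep l l ∧ ¬ c.semdep l l := by
  classical
  let ty : Bool → Set Unit := fun _ => ∅
  let l : Layer Bool Unit ty := ⟨{false}, {true}, fun _ => ∅⟩
  let c : Config Bool Unit ty := ⟨{l}, fun p => if p = false then some true else none⟩
  have valeq : ∀ (P : Set Bool) (μ ν : Val ty P), μ = ν := by
    intro P μ ν
    funext p h
    exact ((μ p h).2 : False).elim
  refine ⟨Bool, Unit, ty, {false}, {true}, c, l, ?_, rfl, rfl,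
    ⟨false, true, rfl, rfl, rfl, rfl, rfl⟩, ⟨true, rfl, false, rfl, rfl⟩, ?_⟩
  · refine ⟨by simp, ?_, ?_, ?_, ?_, ?_⟩
    · intro k hk; rw [Set.mem_singleton_iff] at hk; subst hk; exact subset_rfl
    · intro k hk; rw [Set.mem_singleton_iff] at hk; subst hk; exact subset_rfl
    · intro k hk m hm
      rw [Set.mem_singleton_iff] at hk hm; subst hk; subst hm; exact Or.inl rfl
    · intro i o h
      cases i with
      | false =>
        have ho : o = true := (Option.some.inj h).symm
        subst ho
        constructor
        · exact Set.mem_biUnion rfl rfl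
        · exact Set.mem_biUnion rfl rfl
      | true => simp [c] at h
    · intro i o _; exact subset_rfl
  · unfold Config.semdep
    rw [if_pos rfl]
    rintro ⟨f, μ, μ', hve, hne⟩
    have hf : f = l.f := by
      funext x
      exact ((x false rfl).2 : False).elim
    subst hf
    have hc : c.update l l.f = c := by
      show (⟨({l} \ {l}) ∪ {l.update l.f}, c.A⟩ : Config Bool Unit ty) = c
      have : ({l} \ {l} : Set _) ∪ {l.update l.f} = {l} := by
        simp only [Set.diff_self, Set.empty_union]
        rfl
      rw [this]
    revert hve hne
    revert μ'
    rw [hc]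
    intro μ' hve hne
    exact hne (by rw [valeq _ μ μ']; rfl)
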